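/- arXiv:1311.2279 — 2 statements merged into one kernel-verified Lean document; each statement's English description precedes it below -/
import Mathlib

section
/- Let F : [0,1]² → ℝ be continuous and strictly increasing in each variable separately. Let S ⊆ [0,1] be dense with 0, 1 ∈ S, and let u, v : S → [0,1] be increasing functions satisfying F(u(t), v(t)) = t for all t ∈ S. Then u and v extend uniquely to continuous increasing functions on [0,1] satisfying F(u(t), v(t)) = t for all t ∈ [0,1]. -/
open Set Filter Topology

private lemma extend_aux (S : Set ℝ) (hS : S ⊆ Set.Icc 0 1) (h0S : (0:ℝ) ∈ S)
    (u : ℝ → ℝ) (hu : MonotoneOn u S) (humaps : Set.MapsTo u S (Set.Icc 0 1)) :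
    Monotone (fun t => sSup (u '' (S ∩ Set.Iic t))) ∧
    (∀ t ∈ S, sSup (u '' (S ∩ Set.Iic t)) = u t) ∧
    (∀ t : ℝ, sSup (u '' (S ∩ Set.Iic t)) ∈ Set.Icc (0:ℝ) 1) := by
  have hbdd : ∀ t : ℝ, ∀ x ∈ u '' (S ∩ Set.Iic t), x ≤ 1 := by
    rintro t x ⟨s, hs, rfl⟩
    exact (humaps hs.1).2
  have hnn : ∀ t : ℝ, ∀ x ∈ u '' (S ∩ Set.Iic t), 0 ≤ x := by
    rintro t x ⟨s, hs, rfl⟩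
    exact (humaps hs.1).1
  have hBA : ∀ t : ℝ, BddAbove (u '' (S ∩ Set.Iic t)) := fun t => ⟨1, hbdd t⟩
  refine ⟨?_, ?_, ?_⟩
  · intro t t' htt'
    refine Real.sSup_le ?_ (Real.sSup_nonneg (hnn t'))
    rintro x ⟨s, hs, rfl⟩
    exact le_csSup (hBA t') ⟨s, ⟨hs.1, le_trans hs.2 htt'⟩, rfl⟩
  · intro t ht
    refine le_antisymm ?_ ?_
    · refine Real.sSup_le ?_ (humaps ht).1
      rintro x ⟨s, hs, rfl⟩
      exact hu hs.1 ht hs.2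
    · exact le_csSup (hBA t) ⟨t, ⟨ht, le_refl t⟩, rfl⟩
  · intro t
    exact ⟨Real.sSup_nonneg (hnn t), Real.sSup_le (hbdd t) zero_le_one⟩

/-- Increasing solutions of F(u(t),v(t)) = t on a dense subset extend uniquely to
continuous increasing solutions on [0,1]. -/
theorem extend_to_continuous
    (F : ℝ → ℝ → ℝ)
    (hFc : ContinuousOn (fun q : ℝ × ℝ => F q.1 q.2) (Set.Icc (0:ℝ) 1 ×ˢ Set.Icc (0:ℝ) 1))
    (hF1 : ∀ τ ∈ Set.Icc (0:ℝ) 1, StrictMonoOn (fun t => F t τ) (Set.Icc (0:ℝ) 1))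
    (hF2 : ∀ t ∈ Set.Icc (0:ℝ) 1, StrictMonoOn (fun τ => F t τ) (Set.Icc (0:ℝ) 1))
    (S : Set ℝ) (hS : S ⊆ Set.Icc (0:ℝ) 1) (hdense : ∀ x ∈ Set.Icc (0:ℝ) 1, x ∈ closure S)
    (h0S : (0:ℝ) ∈ S) (h1S : (1:ℝ) ∈ S)
    (u v : ℝ → ℝ)
    (hu : MonotoneOn u S) (hv : MonotoneOn v S)
    (humaps : MapsTo u S (Set.Icc (0:ℝ) 1)) (hvmaps : MapsTo v S (Set.Icc (0:ℝ) 1))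
    (hnorm : ∀ t ∈ S, F (u t) (v t) = t) :
    ∃ U V : ℝ → ℝ,
      ContinuousOn U (Set.Icc (0:ℝ) 1) ∧ ContinuousOn V (Set.Icc (0:ℝ) 1) ∧
      MonotoneOn U (Set.Icc (0:ℝ) 1) ∧ MonotoneOn V (Set.Icc (0:ℝ) 1) ∧
      MapsTo U (Set.Icc (0:ℝ) 1) (Set.Icc (0:ℝ) 1) ∧
      MapsTo V (Set.Icc (0:ℝ) 1) (Set.Icc (0:ℝ) 1) ∧
      (∀ t ∈ S, U t = u t ∧ V t = v t) ∧
      (∀ t ∈ Set.Icc (0:ℝ) 1, F (U t) (V t) = t) ∧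
      (∀ U' V' : ℝ → ℝ,
        ContinuousOn U' (Set.Icc (0:ℝ) 1) → ContinuousOn V' (Set.Icc (0:ℝ) 1) →
        (∀ t ∈ S, U' t = u t ∧ V' t = v t) →
        ∀ t ∈ Set.Icc (0:ℝ) 1, U' t = U t ∧ V' t = V t) := by
  obtain ⟨hUmono0, hUeq0, hUmem0⟩ := extend_aux S hS h0S u hu humaps
  obtain ⟨hVmono0, hVeq0, hVmem0⟩ := extend_aux S hS h0S v hv hvmaps
  set U : ℝ → ℝ := fun t => sSup (u '' (S ∩ Set.Iic t)) with hUdef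
  set V : ℝ → ℝ := fun t => sSup (v '' (S ∩ Set.Iic t)) with hVdef
  have hUmono : Monotone U := hUmono0
  have hVmono : Monotone V := hVmono0
  have hUeq : ∀ t ∈ S, U t = u t := hUeq0
  have hVeq : ∀ t ∈ S, V t = v t := hVeq0
  have hUmem : ∀ t : ℝ, U t ∈ Set.Icc (0:ℝ) 1 := hUmem0
  have hVmem : ∀ t : ℝ, V t ∈ Set.Icc (0:ℝ) 1 := hVmem0
  -- key cancellation lemma
  have key : ∀ t₀ : ℝ, ∀ a α b β : ℝ, a ∈ Set.Icc (0:ℝ) 1 → α ∈ Set.Icc (0:ℝ) 1 →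
      b ∈ Set.Icc (0:ℝ) 1 → β ∈ Set.Icc (0:ℝ) 1 → a ≤ b → α ≤ β →
      F a α = t₀ → F b β = t₀ → a = b ∧ α = β := by
    intro t₀ a α b β ha hα hb hβ hab hαβ h1 h2
    have hb1 : F b α ≤ F b β := (hF2 b hb).monotoneOn hα hβ hαβ
    have hb2 : F a α ≤ F b α := (hF1 α hα).monotoneOn ha hb hab
    constructor
    · rcases eq_or_lt_of_le hab with h | h
      · exact h
      · have : F a α < F b β := lt_of_lt_of_le (hF1 α hα ha hb h) hb1
        rw [h1, h2] at this
        exact absurd this (lt_irrefl t₀)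
    · rcases eq_or_lt_of_le hαβ with h | h
      · exact h
      · have : F a α < F b β := lt_of_le_of_lt hb2 (hF2 b hb hα hβ h)
        rw [h1, h2] at this
        exact absurd this (lt_irrefl t₀)
  -- density on the left and right
  have hdleft : ∀ t₀ : ℝ, 0 < t₀ → t₀ ≤ 1 → (𝓝[S ∩ Set.Iio t₀] t₀).NeBot := by
    intro t₀ h0 h1'
    rw [← mem_closure_iff_nhdsWithin_neBot, Metric.mem_closure_iff]
    intro ε hε
    set δ := min ε t₀ with hδ
    have hδε : δ ≤ ε := min_le_left _ _
    have hδt : δ ≤ t₀ := min_le_right _ _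
    have hδpos : 0 < δ := lt_min hε h0
    have hx : t₀ - δ/2 ∈ Set.Icc (0:ℝ) 1 := ⟨by linarith, by linarith⟩
    have := hdense _ hx
    rw [Metric.mem_closure_iff] at this
    obtain ⟨y, hyS, hy⟩ := this (δ/2) (by linarith)
    rw [Real.dist_eq] at hy
    have hy' := abs_lt.1 hy
    refine ⟨y, ⟨hyS, ?_⟩, ?_⟩
    · simp only [Set.mem_Iio]
      linarith [hy'.1, hy'.2]
    · rw [Real.dist_eq, abs_lt]
      constructor <;> linarith [hy'.1, hy'.2]
  have hdright : ∀ t₀ : ℝ, 0 ≤ t₀ → t₀ < 1 → (𝓝[S ∩ Set.Ioi t₀] t₀).NeBot := by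
    intro t₀ h0 h1'
    rw [← mem_closure_iff_nhdsWithin_neBot, Metric.mem_closure_iff]
    intro ε hε
    set δ := min ε (1 - t₀) with hδ
    have hδε : δ ≤ ε := min_le_left _ _
    have hδt : δ ≤ 1 - t₀ := min_le_right _ _
    have hδpos : 0 < δ := lt_min hε (by linarith)
    have hx : t₀ + δ/2 ∈ Set.Icc (0:ℝ) 1 := ⟨by linarith, by linarith⟩
    have := hdense _ hx
    rw [Metric.mem_closure_iff] at this
    obtain ⟨y, hyS, hy⟩ := this (δ/2) (by linarith)
    rw [Real.dist_eq] at hy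
    have hy' := abs_lt.1 hy
    refine ⟨y, ⟨hyS, ?_⟩, ?_⟩
    · simp only [Set.mem_Ioi]
      linarith [hy'.1, hy'.2]
    · rw [Real.dist_eq, abs_lt]
      constructor <;> linarith [hy'.1, hy'.2]
  -- values of sided limits satisfy the equation
  have hFlim : ∀ (t₀ a α : ℝ) (T : Set ℝ), (𝓝[S ∩ T] t₀).NeBot →
      a ∈ Set.Icc (0:ℝ) 1 → α ∈ Set.Icc (0:ℝ) 1 →
      Tendsto U (𝓝[S ∩ T] t₀) (𝓝 a) → Tendsto V (𝓝[S ∩ T] t₀) (𝓝 α) →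
      F a α = t₀ := by
    intro t₀ a α T hNB ha hα hTU hTV
    have hmemS : ∀ᶠ s in 𝓝[S ∩ T] t₀, s ∈ S :=
      eventually_mem_nhdsWithin.mono (fun s hs => hs.1)
    have hpair : Tendsto (fun s => (U s, V s)) (𝓝[S ∩ T] t₀)
        (𝓝[Set.Icc (0:ℝ) 1 ×ˢ Set.Icc (0:ℝ) 1] (a, α)) := by
      rw [tendsto_nhdsWithin_iff]
      refine ⟨hTU.prodMk_nhds hTV, ?_⟩
      exact Eventually.of_forall fun s => ⟨hUmem s, hVmem s⟩
    have h1 : Tendsto (fun s => F (U s) (V s)) (𝓝[S ∩ T] t₀) (𝓝 (F a α)) :=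
      (hFc (a, α) ⟨ha, hα⟩).tendsto.comp hpair
    have hid : Tendsto (fun s : ℝ => s) (𝓝[S ∩ T] t₀) (𝓝 t₀) :=
      tendsto_id.mono_left nhdsWithin_le_nhds
    have h2 : Tendsto (fun s => F (U s) (V s)) (𝓝[S ∩ T] t₀) (𝓝 t₀) := by
      refine hid.congr' ?_
      exact hmemS.mono fun s hs => by
        simp only [hUeq s hs, hVeq s hs]
        exact (hnorm s hs).symm
    exact tendsto_nhds_unique h1 h2
  -- left limits
  have hleft : ∀ t₀ : ℝ, 0 < t₀ → t₀ ≤ 1 →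
      F (sSup (U '' Set.Iio t₀)) (sSup (V '' Set.Iio t₀)) = t₀ ∧
      sSup (U '' Set.Iio t₀) ∈ Set.Icc (0:ℝ) 1 ∧ sSup (V '' Set.Iio t₀) ∈ Set.Icc (0:ℝ) 1 ∧
      sSup (U '' Set.Iio t₀) ≤ U t₀ ∧ sSup (V '' Set.Iio t₀) ≤ V t₀ := by
    intro t₀ h0 h1'
    have memU : sSup (U '' Set.Iio t₀) ∈ Set.Icc (0:ℝ) 1 := by
      constructor
      · exact Real.sSup_nonneg (by rintro x ⟨s, _, rfl⟩; exact (hUmem s).1)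
      · exact Real.sSup_le (by rintro x ⟨s, _, rfl⟩; exact (hUmem s).2) zero_le_one
    have memV : sSup (V '' Set.Iio t₀) ∈ Set.Icc (0:ℝ) 1 := by
      constructor
      · exact Real.sSup_nonneg (by rintro x ⟨s, _, rfl⟩; exact (hVmem s).1)
      · exact Real.sSup_le (by rintro x ⟨s, _, rfl⟩; exact (hVmem s).2) zero_le_one
    have leU : sSup (U '' Set.Iio t₀) ≤ U t₀ :=
      Real.sSup_le (by rintro x ⟨s, hs, rfl⟩; exact hUmono (le_of_lt hs)) (hUmem t₀).1
    have leV : sSup (V '' Set.Iio t₀) ≤ V t₀ :=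
      Real.sSup_le (by rintro x ⟨s, hs, rfl⟩; exact hVmono (le_of_lt hs)) (hVmem t₀).1
    have hNB := hdleft t₀ h0 h1'
    have hmono : 𝓝[S ∩ Set.Iio t₀] t₀ ≤ 𝓝[Set.Iio t₀] t₀ :=
      nhdsWithin_mono t₀ Set.inter_subset_right
    have hTU : Tendsto U (𝓝[S ∩ Set.Iio t₀] t₀) (𝓝 (sSup (U '' Set.Iio t₀))) :=
      (hUmono.tendsto_nhdsLT t₀).mono_left hmono
    have hTV : Tendsto V (𝓝[S ∩ Set.Iio t₀] t₀) (𝓝 (sSup (V '' Set.Iio t₀))) :=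
      (hVmono.tendsto_nhdsLT t₀).mono_left hmono
    exact ⟨hFlim t₀ _ _ (Set.Iio t₀) hNB memU memV hTU hTV, memU, memV, leU, leV⟩
  -- right limits
  have hright : ∀ t₀ : ℝ, 0 ≤ t₀ → t₀ < 1 →
      F (sInf (U '' Set.Ioi t₀)) (sInf (V '' Set.Ioi t₀)) = t₀ ∧
      sInf (U '' Set.Ioi t₀) ∈ Set.Icc (0:ℝ) 1 ∧ sInf (V '' Set.Ioi t₀) ∈ Set.Icc (0:ℝ) 1 ∧
      U t₀ ≤ sInf (U '' Set.Ioi t₀) ∧ V t₀ ≤ sInf (V '' Set.Ioi t₀) := by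
    intro t₀ h0 h1'
    have hne : (U '' Set.Ioi t₀).Nonempty := (Set.nonempty_Ioi (a := t₀)).image U
    have hneV : (V '' Set.Ioi t₀).Nonempty := (Set.nonempty_Ioi (a := t₀)).image V
    have memU : sInf (U '' Set.Ioi t₀) ∈ Set.Icc (0:ℝ) 1 := by
      constructor
      · exact le_csInf hne (by rintro x ⟨s, _, rfl⟩; exact (hUmem s).1)
      · refine le_trans (csInf_le ⟨0, by rintro x ⟨s, _, rfl⟩; exact (hUmem s).1⟩
          ⟨t₀ + 1, by simp, rfl⟩) (hUmem (t₀ + 1)).2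
    have memV : sInf (V '' Set.Ioi t₀) ∈ Set.Icc (0:ℝ) 1 := by
      constructor
      · exact le_csInf hneV (by rintro x ⟨s, _, rfl⟩; exact (hVmem s).1)
      · refine le_trans (csInf_le ⟨0, by rintro x ⟨s, _, rfl⟩; exact (hVmem s).1⟩
          ⟨t₀ + 1, by simp, rfl⟩) (hVmem (t₀ + 1)).2
    have leU : U t₀ ≤ sInf (U '' Set.Ioi t₀) :=
      le_csInf hne (by rintro x ⟨s, hs, rfl⟩; exact hUmono (le_of_lt hs))
    have leV : V t₀ ≤ sInf (V '' Set.Ioi t₀) :=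
      le_csInf hneV (by rintro x ⟨s, hs, rfl⟩; exact hVmono (le_of_lt hs))
    have hNB := hdright t₀ h0 h1'
    have hmono : 𝓝[S ∩ Set.Ioi t₀] t₀ ≤ 𝓝[Set.Ioi t₀] t₀ :=
      nhdsWithin_mono t₀ Set.inter_subset_right
    have hTU : Tendsto U (𝓝[S ∩ Set.Ioi t₀] t₀) (𝓝 (sInf (U '' Set.Ioi t₀))) :=
      (hUmono.tendsto_nhdsGT t₀).mono_left hmono
    have hTV : Tendsto V (𝓝[S ∩ Set.Ioi t₀] t₀) (𝓝 (sInf (V '' Set.Ioi t₀))) :=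
      (hVmono.tendsto_nhdsGT t₀).mono_left hmono
    exact ⟨hFlim t₀ _ _ (Set.Ioi t₀) hNB memU memV hTU hTV, memU, memV, leU, leV⟩
  -- main continuity + equation statement
  have hcont : ∀ t₀ ∈ Set.Icc (0:ℝ) 1, ContinuousWithinAt U (Set.Icc (0:ℝ) 1) t₀ ∧
      ContinuousWithinAt V (Set.Icc (0:ℝ) 1) t₀ ∧ F (U t₀) (V t₀) = t₀ := by
    intro t₀ ht₀
    rcases eq_or_lt_of_le ht₀.1 with h0 | h0
    · -- t₀ = 0
      have h0' : t₀ = 0 := h0.symm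
      subst h0'
      obtain ⟨hFr, hbr, hβr, hUr, hVr⟩ := hright 0 le_rfl one_pos
      have hF0 : F (U 0) (V 0) = 0 := by
        rw [hUeq 0 h0S, hVeq 0 h0S]; exact hnorm 0 h0S
      obtain ⟨hUb, hVb⟩ := key 0 (U 0) (V 0) _ _ (hUmem 0) (hVmem 0) hbr hβr hUr hVr hF0 hFr
      have hcU : ContinuousWithinAt U (Set.Ici (0:ℝ)) 0 := by
        rw [← continuousWithinAt_Ioi_iff_Ici]
        have h := hUmono.tendsto_nhdsGT 0
        rw [← hUb] at h
        exact h
      have hcV : ContinuousWithinAt V (Set.Ici (0:ℝ)) 0 := by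
        rw [← continuousWithinAt_Ioi_iff_Ici]
        have h := hVmono.tendsto_nhdsGT 0
        rw [← hVb] at h
        exact h
      exact ⟨hcU.mono Set.Icc_subset_Ici_self, hcV.mono Set.Icc_subset_Ici_self, hF0⟩
    rcases eq_or_lt_of_le ht₀.2 with h1 | h1
    · -- t₀ = 1
      subst h1
      obtain ⟨hFl, hal, hαl, hUl, hVl⟩ := hleft 1 one_pos le_rfl
      have hF1' : F (U 1) (V 1) = 1 := by
        rw [hUeq 1 h1S, hVeq 1 h1S]; exact hnorm 1 h1S
      obtain ⟨hUb, hVb⟩ := key 1 _ _ (U 1) (V 1) hal hαl (hUmem 1) (hVmem 1) hUl hVl hFl hF1'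
      have hcU : ContinuousWithinAt U (Set.Iic (1:ℝ)) 1 := by
        rw [← continuousWithinAt_Iio_iff_Iic]
        have h := hUmono.tendsto_nhdsLT 1
        rw [hUb] at h
        exact h
      have hcV : ContinuousWithinAt V (Set.Iic (1:ℝ)) 1 := by
        rw [← continuousWithinAt_Iio_iff_Iic]
        have h := hVmono.tendsto_nhdsLT 1
        rw [hVb] at h
        exact h
      exact ⟨hcU.mono Set.Icc_subset_Iic_self, hcV.mono Set.Icc_subset_Iic_self, hF1'⟩
    · -- interior
      obtain ⟨hFl, hal, hαl, hUl, hVl⟩ := hleft t₀ h0 ht₀.2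
      obtain ⟨hFr, har, hαr, hUr, hVr⟩ := hright t₀ ht₀.1 h1
      obtain ⟨hUab, hVab⟩ := key t₀ _ _ _ _ hal hαl har hαr
        (le_trans hUl hUr) (le_trans hVl hVr) hFl hFr
      have hUval : U t₀ = sSup (U '' Set.Iio t₀) :=
        le_antisymm (by rw [hUab]; exact hUr) hUl
      have hVval : V t₀ = sSup (V '' Set.Iio t₀) :=
        le_antisymm (by rw [hVab]; exact hVr) hVl
      have hcUl : ContinuousWithinAt U (Set.Iic t₀) t₀ := by
        rw [← continuousWithinAt_Iio_iff_Iic]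
        have h := hUmono.tendsto_nhdsLT t₀
        rw [← hUval] at h
        exact h
      have hcUr : ContinuousWithinAt U (Set.Ici t₀) t₀ := by
        rw [← continuousWithinAt_Ioi_iff_Ici]
        have h := hUmono.tendsto_nhdsGT t₀
        rw [← hUab, ← hUval] at h
        exact h
      have hcVl : ContinuousWithinAt V (Set.Iic t₀) t₀ := by
        rw [← continuousWithinAt_Iio_iff_Iic]
        have h := hVmono.tendsto_nhdsLT t₀
        rw [← hVval] at h
        exact h
      have hcVr : ContinuousWithinAt V (Set.Ici t₀) t₀ := by
        rw [← continuousWithinAt_Ioi_iff_Ici]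
        have h := hVmono.tendsto_nhdsGT t₀
        rw [← hVab, ← hVval] at h
        exact h
      have hsub : Set.Icc (0:ℝ) 1 ⊆ Set.Iic t₀ ∪ Set.Ici t₀ := fun x _ => le_total x t₀
      have hFt : F (U t₀) (V t₀) = t₀ := by rw [hUval, hVval]; exact hFl
      exact ⟨(hcUl.union hcUr).mono hsub, (hcVl.union hcVr).mono hsub, hFt⟩
  refine ⟨U, V, fun t ht => (hcont t ht).1, fun t ht => (hcont t ht).2.1,
    hUmono.monotoneOn _, hVmono.monotoneOn _, fun t _ => hUmem t, fun t _ => hVmem t,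
    fun t ht => ⟨hUeq t ht, hVeq t ht⟩, fun t ht => (hcont t ht).2.2, ?_⟩
  -- uniqueness
  intro U' V' hU'c hV'c hext t ht
  have hNB : (𝓝[S] t).NeBot := mem_closure_iff_nhdsWithin_neBot.1 (hdense t ht)
  have hmemS : ∀ᶠ s in 𝓝[S] t, s ∈ S := eventually_mem_nhdsWithin
  constructor
  · have hl1 : Tendsto U' (𝓝[S] t) (𝓝 (U' t)) := (hU'c t ht).mono hS
    have hl2 : Tendsto U (𝓝[S] t) (𝓝 (U t)) := ((hcont t ht).1).mono hS
    have heq : U' =ᶠ[𝓝[S] t] U := hmemS.mono fun s hs => by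
      rw [(hext s hs).1, hUeq s hs]
    exact tendsto_nhds_unique (hl1.congr' heq) hl2
  · have hl1 : Tendsto V' (𝓝[S] t) (𝓝 (V' t)) := (hV'c t ht).mono hS
    have hl2 : Tendsto V (𝓝[S] t) (𝓝 (V t)) := ((hcont t ht).2.1).mono hS
    have heq : V' =ᶠ[𝓝[S] t] V := hmemS.mono fun s hs => by
      rw [(hext s hs).2, hVeq s hs]
    exact tendsto_nhds_unique (hl1.congr' heq) hl2
end

section
/- Let F : [0,1]² → ℝ be increasing in the first variable. Suppose there exist ε ∈ (0,1) and δ > 0 such that for all 0 ≤ s < s' ≤ 1 and 0 ≤ τ < τ' ≤ 1 with s' − s < δ and τ' − τ < δ, one has (F(s', τ) − F(s, τ)) ≤ (1+ε)(F(s', τ') − F(s, τ')). Let u, v : [0,1] → [0,1] be increasing with moduli |u(a) − u(b)|, |v(a) − v(b)| < δ whenever |a − b| < μ for some μ > 0. Let Z be a partition of [0,1] with mesh < μ and Z' a refinement of Z with mesh < μ. Then S₁(u, v, 1, Z) ≤ (1+ε) S₁(u, v, 1, Z'), where S₁(u,v,1,W) = Σ over consecutive points w_j < w_{j+1} of W of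 [F(u(w_{j+1}), v(w_j)) − F(u(w_j), v(w_j))]. -/
open Set Finset

/-- S₁-sum for a partition given by points `p : Fin (s+1) → ℝ`. -/
noncomputable def S1sum (F : ℝ → ℝ → ℝ) (u v : ℝ → ℝ) {s : ℕ} (p : Fin (s + 1) → ℝ) : ℝ :=
  ∑ l : Fin s, (F (u (p l.succ)) (v (p l.castSucc)) - F (u (p l.castSucc)) (v (p l.castSucc)))

def IsPartitionOf {s : ℕ} (p : Fin (s + 1) → ℝ) (t : ℝ) : Prop :=
  StrictMono p ∧ p 0 = 0 ∧ p (Fin.last s) = t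

def MeshLt {s : ℕ} (p : Fin (s + 1) → ℝ) (μ : ℝ) : Prop :=
  ∀ l : Fin s, p l.succ - p l.castSucc < μ

private lemma telescope_Ico (g : ℕ → ℝ) {a b : ℕ} (h : a ≤ b) :
    ∑ k ∈ Finset.Ico a b, (g (k + 1) - g k) = g b - g a := by
  induction b, h using Nat.le_induction with
  | base => simp
  | succ b hab ih => rw [Finset.sum_Ico_succ_top hab, ih]; ring

private lemma sum_blocks (a : ℕ → ℝ) (n : ℕ → ℕ) (hn : Monotone n) (m : ℕ) :
    ∑ j ∈ Finset.range m, ∑ k ∈ Finset.Ico (n j) (n (j + 1)), a k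
      = ∑ k ∈ Finset.Ico (n 0) (n m), a k := by
  induction m with
  | zero => simp
  | succ m ih =>
      rw [Finset.sum_range_succ, ih,
        Finset.sum_Ico_consecutive _ (hn (Nat.zero_le m)) (hn (Nat.le_succ m))]

/-- Refinement-comparison estimate (step 5 of the existence proof). -/
theorem S1_refinement_comparison
    (F : ℝ → ℝ → ℝ)
    (hFmono : ∀ τ ∈ Set.Icc (0:ℝ) 1, MonotoneOn (fun t => F t τ) (Set.Icc (0:ℝ) 1))
    (ε δ : ℝ) (hε : ε ∈ Set.Ioo (0:ℝ) 1) (hδ : 0 < δ)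
    (hratio : ∀ s s' τ τ' : ℝ, 0 ≤ s → s < s' → s' ≤ 1 → 0 ≤ τ → τ < τ' → τ' ≤ 1 →
      s' - s < δ → τ' - τ < δ →
      F s' τ - F s τ ≤ (1 + ε) * (F s' τ' - F s τ'))
    (u v : ℝ → ℝ)
    (hu : MonotoneOn u (Set.Icc (0:ℝ) 1)) (hv : MonotoneOn v (Set.Icc (0:ℝ) 1))
    (humaps : MapsTo u (Set.Icc (0:ℝ) 1) (Set.Icc (0:ℝ) 1))
    (hvmaps : MapsTo v (Set.Icc (0:ℝ) 1) (Set.Icc (0:ℝ) 1))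
    (μ : ℝ) (hμ : 0 < μ)
    (hmodu : ∀ a ∈ Set.Icc (0:ℝ) 1, ∀ b ∈ Set.Icc (0:ℝ) 1, |a - b| < μ →
      |u a - u b| < δ ∧ |v a - v b| < δ)
    (m m' : ℕ) (Z : Fin (m + 1) → ℝ) (Z' : Fin (m' + 1) → ℝ)
    (hZ : IsPartitionOf Z 1) (hZ' : IsPartitionOf Z' 1)
    (hZmesh : MeshLt Z μ) (hZ'mesh : MeshLt Z' μ)
    (hrefine : Set.range Z ⊆ Set.range Z') :
    S1sum F u v Z ≤ (1 + ε) * S1sum F u v Z' := by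
  obtain ⟨hZmono, hZ0, hZlast⟩ := hZ
  obtain ⟨hZ'mono, hZ'0, hZ'last⟩ := hZ'
  -- the embedding φ of the coarse partition into the fine one
  have hchoice : ∀ j : Fin (m + 1), ∃ k : Fin (m' + 1), Z' k = Z j :=
    fun j => hrefine ⟨j, rfl⟩
  choose φ hφ using hchoice
  have hφmono : StrictMono φ := fun i j h =>
    hZ'mono.lt_iff_lt.mp (by rw [hφ, hφ]; exact hZmono h)
  have hφ0 : φ 0 = 0 := hZ'mono.injective (by rw [hφ, hZ0, hZ'0])
  have hφlast : φ (Fin.last m) = Fin.last m' :=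
    hZ'mono.injective (by rw [hφ, hZlast, hZ'last])
  -- natural-number versions of everything
  set P : ℕ → ℝ := fun k => Z' ⟨min k m', Nat.lt_succ_of_le (min_le_right _ _)⟩ with hPdef
  set Q : ℕ → ℝ := fun j => Z ⟨min j m, Nat.lt_succ_of_le (min_le_right _ _)⟩ with hQdef
  set n : ℕ → ℕ := fun j => if h : j ≤ m then (φ ⟨j, Nat.lt_succ_of_le h⟩).val else m'
    with hndef
  have hP : ∀ k (h : k ≤ m'), P k = Z' ⟨k, Nat.lt_succ_of_le h⟩ := by
    intro k h
    simp only [hPdef]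
    congr 1
    exact Fin.ext (by simpa using Nat.min_eq_left h)
  have hQ : ∀ j (h : j ≤ m), Q j = Z ⟨j, Nat.lt_succ_of_le h⟩ := by
    intro j h
    simp only [hQdef]
    congr 1
    exact Fin.ext (by simpa using Nat.min_eq_left h)
  have hn : ∀ j (h : j ≤ m), n j = (φ ⟨j, Nat.lt_succ_of_le h⟩).val := by
    intro j h; simp only [hndef, dif_pos h]
  have hnle : ∀ j, n j ≤ m' := by
    intro j
    by_cases h : j ≤ m
    · rw [hn j h]; exact Nat.lt_succ_iff.mp (φ _).isLt
    · simp only [hndef, dif_neg h]; exact le_rfl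
  have hnmono : Monotone n := by
    intro a b hab
    by_cases hb : b ≤ m
    · have ha : a ≤ m := hab.trans hb
      rw [hn a ha, hn b hb]
      exact hφmono.monotone (by exact Fin.mk_le_mk.mpr hab)
    · simp only [hndef, dif_neg hb]
      exact (hnle a).trans_eq (by simp [hndef, dif_neg hb])
  have hn0 : n 0 = 0 := by
    rw [hn 0 (Nat.zero_le m)]
    have : (⟨0, Nat.lt_succ_of_le (Nat.zero_le m)⟩ : Fin (m + 1)) = 0 := rfl
    rw [this, hφ0]; rfl
  have hnm : n m = m' := by
    rw [hn m le_rfl]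
    have : (⟨m, Nat.lt_succ_of_le le_rfl⟩ : Fin (m + 1)) = Fin.last m := rfl
    rw [this, hφlast]; rfl
  have hQP : ∀ j (h : j ≤ m), Q j = P (n j) := by
    intro j h
    rw [hQ j h, hn j h, hP _ (Nat.lt_succ_iff.mp (φ _).isLt)]
    rw [← hφ ⟨j, Nat.lt_succ_of_le h⟩]
  -- basic facts about P, Q
  have hPmem : ∀ k, P k ∈ Set.Icc (0:ℝ) 1 := by
    intro k
    constructor
    · rw [← hZ'0]; exact hZ'mono.monotone (Fin.zero_le _)
    · rw [← hZ'last]; exact hZ'mono.monotone (Fin.le_last _)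
  have hPmono : ∀ k k', k ≤ k' → k' ≤ m' → P k ≤ P k' := by
    intro k k' hkk hk'
    rw [hP k (hkk.trans hk'), hP k' hk']
    exact hZ'mono.monotone (Fin.mk_le_mk.mpr hkk)
  have hPmesh : ∀ k, k < m' → P (k + 1) - P k < μ := by
    intro k hk
    rw [hP (k + 1) hk, hP k hk.le]
    have := hZ'mesh ⟨k, hk⟩
    simpa [Fin.succ, Fin.castSucc, Fin.castAdd, Fin.castLE] using this
  have hQmesh : ∀ j, j < m → Q (j + 1) - Q j < μ := by
    intro j hj
    rw [hQ (j + 1) hj, hQ j hj.le]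
    have := hZmesh ⟨j, hj⟩
    simpa [Fin.succ, Fin.castSucc, Fin.castAdd, Fin.castLE] using this
  -- rewrite the two S1 sums as range sums
  have hS1Z' : S1sum F u v Z'
      = ∑ k ∈ Finset.range m', (F (u (P (k + 1))) (v (P k)) - F (u (P k)) (v (P k))) := by
    rw [S1sum, ← Fin.sum_univ_eq_sum_range
      (fun k => F (u (P (k + 1))) (v (P k)) - F (u (P k)) (v (P k))) m']
    refine Finset.sum_congr rfl fun l _ => ?_
    have h1 : P (l.val + 1) = Z' l.succ := by
      rw [hP _ l.isLt]; congr 1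
    have h2 : P l.val = Z' l.castSucc := by
      rw [hP l.val l.isLt.le]; congr 1
    rw [h1, h2]
  have hS1Z : S1sum F u v Z
      = ∑ j ∈ Finset.range m, (F (u (Q (j + 1))) (v (Q j)) - F (u (Q j)) (v (Q j))) := by
    rw [S1sum, ← Fin.sum_univ_eq_sum_range
      (fun j => F (u (Q (j + 1))) (v (Q j)) - F (u (Q j)) (v (Q j))) m]
    refine Finset.sum_congr rfl fun l _ => ?_
    have h1 : Q (l.val + 1) = Z l.succ := by
      rw [hQ _ l.isLt]; congr 1
    have h2 : Q l.val = Z l.castSucc := by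
      rw [hQ l.val l.isLt.le]; congr 1
    rw [h1, h2]
  -- main chain
  rw [hS1Z, hS1Z', Finset.mul_sum]
  calc ∑ j ∈ Finset.range m, (F (u (Q (j + 1))) (v (Q j)) - F (u (Q j)) (v (Q j)))
      = ∑ j ∈ Finset.range m, ∑ k ∈ Finset.Ico (n j) (n (j + 1)),
          (F (u (P (k + 1))) (v (Q j)) - F (u (P k)) (v (Q j))) := by
        refine Finset.sum_congr rfl fun j hj => ?_
        have hj' : j < m := Finset.mem_range.mp hj
        rw [telescope_Ico (fun k => F (u (P k)) (v (Q j))) (hnmono (Nat.le_succ j)),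
          ← hQP j hj'.le, ← hQP (j + 1) hj']
    _ ≤ ∑ j ∈ Finset.range m, ∑ k ∈ Finset.Ico (n j) (n (j + 1)),
          (1 + ε) * (F (u (P (k + 1))) (v (P k)) - F (u (P k)) (v (P k))) := by
        refine Finset.sum_le_sum fun j hj => Finset.sum_le_sum fun k hk => ?_
        have hj' : j < m := Finset.mem_range.mp hj
        obtain ⟨hk1, hk2⟩ := Finset.mem_Ico.mp hk
        rw [hQP j hj'.le]
        have hkm' : k < m' := hk2.trans_le (hnle (j + 1))
        -- set up the four values
        have hPk01 := hPmem k
        have hPk101 := hPmem (k + 1)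
        have hPnj01 := hPmem (n j)
        have hs01 := humaps hPk01
        have hs'01 := humaps hPk101
        have hτ01 := hvmaps hPnj01
        have hτ'01 := hvmaps hPk01
        have hs_le : u (P k) ≤ u (P (k + 1)) :=
          hu hPk01 hPk101 (hPmono k (k + 1) (Nat.le_succ k) hkm')
        have hτ_le : v (P (n j)) ≤ v (P k) :=
          hv hPnj01 hPk01 (hPmono (n j) k hk1 hkm'.le)
        have hsd : u (P (k + 1)) - u (P k) < δ := by
          have h1 : |P (k + 1) - P k| < μ := by
            rw [abs_of_nonneg (sub_nonneg.mpr (hPmono k (k + 1) (Nat.le_succ k) hkm'))]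
            exact hPmesh k hkm'
          have := (hmodu _ hPk101 _ hPk01 h1).1
          calc u (P (k + 1)) - u (P k) ≤ |u (P (k + 1)) - u (P k)| := le_abs_self _
            _ < δ := this
        have hτd : v (P k) - v (P (n j)) < δ := by
          have hPle : P (n j) ≤ P k := hPmono (n j) k hk1 hkm'.le
          have hPup : P k ≤ P (n (j + 1)) := hPmono k (n (j + 1)) hk2.le (hnle (j + 1))
          have h1 : |P k - P (n j)| < μ := by
            rw [abs_of_nonneg (sub_nonneg.mpr hPle)]
            have := hQmesh j hj'
            rw [hQP j hj'.le, hQP (j + 1) hj'] at this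
            linarith
          have := (hmodu _ hPk01 _ hPnj01 h1).2
          calc v (P k) - v (P (n j)) ≤ |v (P k) - v (P (n j))| := le_abs_self _
            _ < δ := this
        rcases eq_or_lt_of_le hs_le with h | h
        · rw [h]; simp
        rcases eq_or_lt_of_le hτ_le with h2 | h2
        · rw [h2]
          have h0 : 0 ≤ F (u (P (k + 1))) (v (P k)) - F (u (P k)) (v (P k)) :=
            sub_nonneg.mpr (hFmono _ hτ'01 hs01 hs'01 hs_le)
          nlinarith [hε.1]
        · exact hratio _ _ _ _ hs01.1 h hs'01.2 hτ01.1 h2 hτ'01.2 hsd hτd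
    _ = ∑ k ∈ Finset.range m',
          (1 + ε) * (F (u (P (k + 1))) (v (P k)) - F (u (P k)) (v (P k))) := by
        rw [sum_blocks _ n hnmono m, hn0, hnm, Finset.range_eq_Ico]
end
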